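/- arXiv:2511.16061 — 2 statements merged into one kernel-verified Lean document; each statement's English description precedes it below -/
import Mathlib

section
/- Let ℝ^d = U ⊕ V be an orthogonal decomposition into nonzero subspaces, and let f_U, f_V: ℝ² → ℝ. Define the two-subspace radial activation σ(x) = f_U(‖x_U‖, ‖x_V‖)·x_U + f_V(‖x_U‖, ‖x_V‖)·x_V, where x = x_U + x_V with x_U ∈ U, x_V ∈ V. Suppose there exist a, b > 0 with f_U(a,b) ≠ f_V(a,b). Then there exists a one-dimensional subspace L ⊂ ℝ^d such that σ(L) ⊄ L. -/
theorem tsra_not_preserve_all_lines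
    (d : ℕ) (U : Submodule ℝ (EuclideanSpace ℝ (Fin d)))
    (hU : U ≠ ⊥) (hV : Uᗮ ≠ ⊥)
    (f_U f_V : ℝ → ℝ → ℝ)
    (σ : EuclideanSpace ℝ (Fin d) → EuclideanSpace ℝ (Fin d))
    (hσ : ∀ x, σ x =
      f_U ‖(Submodule.orthogonalProjection U x : EuclideanSpace ℝ (Fin d))‖
          ‖(Submodule.orthogonalProjection Uᗮ x : EuclideanSpace ℝ (Fin d))‖ •
        (Submodule.orthogonalProjection U x : EuclideanSpace ℝ (Fin d)) +
      f_V ‖(Submodule.orthogonalProjection U x : EuclideanSpace ℝ (Fin d))‖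
          ‖(Submodule.orthogonalProjection Uᗮ x : EuclideanSpace ℝ (Fin d))‖ •
        (Submodule.orthogonalProjection Uᗮ x : EuclideanSpace ℝ (Fin d)))
    (hne : ∃ a b : ℝ, 0 < a ∧ 0 < b ∧ f_U a b ≠ f_V a b) :
    ∃ L : Submodule ℝ (EuclideanSpace ℝ (Fin d)),
      Module.finrank ℝ L = 1 ∧ ¬ (∀ x ∈ L, σ x ∈ L) := by
  obtain ⟨a, b, ha, hb, hab⟩ := hne
  -- pick u ∈ U of norm a
  obtain ⟨u0, hu0U, hu0⟩ := Submodule.exists_mem_ne_zero_of_ne_bot hU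
  obtain ⟨v0, hv0V, hv0⟩ := Submodule.exists_mem_ne_zero_of_ne_bot hV
  set u : EuclideanSpace ℝ (Fin d) := (a / ‖u0‖) • u0 with hu_def
  set v : EuclideanSpace ℝ (Fin d) := (b / ‖v0‖) • v0 with hv_def
  have hu0n : ‖u0‖ ≠ 0 := norm_ne_zero_iff.mpr hu0
  have hv0n : ‖v0‖ ≠ 0 := norm_ne_zero_iff.mpr hv0
  have huU : u ∈ U := U.smul_mem _ hu0U
  have hvV : v ∈ Uᗮ := Uᗮ.smul_mem _ hv0V
  have hun : ‖u‖ = a := by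
    rw [hu_def, norm_smul, Real.norm_eq_abs, abs_div, abs_of_pos ha, abs_of_nonneg (norm_nonneg _),
      div_mul_cancel₀ _ hu0n]
  have hvn : ‖v‖ = b := by
    rw [hv_def, norm_smul, Real.norm_eq_abs, abs_div, abs_of_pos hb, abs_of_nonneg (norm_nonneg _),
      div_mul_cancel₀ _ hv0n]
  have hune : u ≠ 0 := by intro h; rw [h, norm_zero] at hun; exact ha.ne hun
  have hvne : v ≠ 0 := by intro h; rw [h, norm_zero] at hvn; exact hb.ne hvn
  set x := u + v with hx_def
  have eUu : ((Submodule.orthogonalProjection U u : EuclideanSpace ℝ (Fin d))) = u :=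
    (Submodule.starProjection_eq_self_iff (K := U)).mpr huU
  have eUv : Submodule.orthogonalProjection U v = 0 :=
    Submodule.orthogonalProjectionOnto_apply_of_mem_orthogonal hvV
  have eVv : ((Submodule.orthogonalProjection Uᗮ v : EuclideanSpace ℝ (Fin d))) = v :=
    (Submodule.starProjection_eq_self_iff (K := Uᗮ)).mpr hvV
  have eVu : Submodule.orthogonalProjection Uᗮ u = 0 :=
    Submodule.orthogonalProjectionOnto_orthogonal_apply_eq_zero huU
  have hpU : (Submodule.orthogonalProjection U x : EuclideanSpace ℝ (Fin d)) = u := by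
    rw [hx_def, map_add]; push_cast [eUv, eUu]; simp
  have hxne : x ≠ 0 := by
    intro h
    rw [h, map_zero] at hpU
    exact hune (by simpa using hpU.symm)
  have hpV : (Submodule.orthogonalProjection Uᗮ x : EuclideanSpace ℝ (Fin d)) = v := by
    rw [hx_def, map_add]; push_cast [eVu, eVv]; simp
  refine ⟨Submodule.span ℝ {x}, finrank_span_singleton hxne, ?_⟩
  intro hall
  have hxmem : x ∈ Submodule.span ℝ {x} := Submodule.mem_span_singleton_self x
  have hσx := hall x hxmem
  rw [hσ x, hpU, hpV, hun, hvn] at hσx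
  obtain ⟨c, hc⟩ := Submodule.mem_span_singleton.mp hσx
  rw [hx_def, smul_add] at hc
  have h1 : f_U a b = c := by
    have := congrArg (fun y => (Submodule.orthogonalProjection U y : EuclideanSpace ℝ (Fin d))) hc
    simp only [map_add, map_smul] at this
    push_cast [eUv, eUu] at this
    simp only [smul_zero, add_zero] at this
    exact smul_left_injective ℝ hune (by simpa using this.symm)
  have h2 : f_V a b = c := by
    have := congrArg (fun y => (Submodule.orthogonalProjection Uᗮ y : EuclideanSpace ℝ (Fin d))) hc
    simp only [map_add, map_smul] at this
    push_cast [eVu, eVv] at this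
    simp only [smul_zero, zero_add] at this
    exact smul_left_injective ℝ hvne (by simpa using this.symm)
  exact hab (h1.trans h2.symm)
end

section
/- Let ℝ^{d₁} = U ⊕ V be an orthogonal decomposition with orthogonal projections Q_U, Q_V, let W: ℝ^{d₀} → ℝ^{d₁} be linear, b ∈ ℝ^{d₁}, and let σ be a TSRA with respect to U and V. Then the span S of {σ(Wx + b) : x ∈ ℝ^{d₀}} satisfies dim S ≤ 2(d₀ + 1). -/
theorem tsra_span_dim_le_with_bias
    (d₀ d₁ : ℕ) (U : Submodule ℝ (EuclideanSpace ℝ (Fin d₁)))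
    (f_U f_V : ℝ → ℝ → ℝ)
    (σ : EuclideanSpace ℝ (Fin d₁) → EuclideanSpace ℝ (Fin d₁))
    (hσ : ∀ x, σ x =
      f_U ‖(Submodule.orthogonalProjectionOnto U x : EuclideanSpace ℝ (Fin d₁))‖
          ‖(Submodule.orthogonalProjectionOnto Uᗮ x : EuclideanSpace ℝ (Fin d₁))‖ •
        (Submodule.orthogonalProjectionOnto U x : EuclideanSpace ℝ (Fin d₁)) +
      f_V ‖(Submodule.orthogonalProjectionOnto U x : EuclideanSpace ℝ (Fin d₁))‖
          ‖(Submodule.orthogonalProjectionOnto Uᗮ x : EuclideanSpace ℝ (Fin d₁))‖ •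
        (Submodule.orthogonalProjectionOnto Uᗮ x : EuclideanSpace ℝ (Fin d₁)))
    (W : EuclideanSpace ℝ (Fin d₀) →ₗ[ℝ] EuclideanSpace ℝ (Fin d₁))
    (b : EuclideanSpace ℝ (Fin d₁)) :
    Module.finrank ℝ (Submodule.span ℝ {y | ∃ x, y = σ (W x + b)}) ≤ 2 * (d₀ + 1) := by
  classical
  let qU : (EuclideanSpace ℝ (Fin d₁)) →ₗ[ℝ] (EuclideanSpace ℝ (Fin d₁)) := U.subtype ∘ₗ (Submodule.orthogonalProjectionOnto U).toLinearMap
  let qV : (EuclideanSpace ℝ (Fin d₁)) →ₗ[ℝ] (EuclideanSpace ℝ (Fin d₁)) := Uᗮ.subtype ∘ₗ (Submodule.orthogonalProjectionOnto Uᗮ).toLinearMap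
  let T : Submodule ℝ (EuclideanSpace ℝ (Fin d₁)) := LinearMap.range W ⊔ Submodule.span ℝ {b}
  have hmem : ∀ x, W x + b ∈ T := fun x =>
    Submodule.add_mem _ (Submodule.mem_sup_left ⟨x, rfl⟩)
      (Submodule.mem_sup_right (Submodule.mem_span_singleton_self b))
  have hsub : Submodule.span ℝ {y | ∃ x, y = σ (W x + b)} ≤ T.map qU ⊔ T.map qV := by
    rw [Submodule.span_le]
    rintro y ⟨x, rfl⟩
    rw [hσ]
    exact Submodule.add_mem _
      (Submodule.mem_sup_left (Submodule.smul_mem _ _ ⟨W x + b, hmem x, rfl⟩))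
      (Submodule.mem_sup_right (Submodule.smul_mem _ _ ⟨W x + b, hmem x, rfl⟩))
  have hT : Module.finrank ℝ T ≤ d₀ + 1 := by
    have h1 : Module.finrank ℝ (LinearMap.range W) ≤ d₀ := by
      simpa using LinearMap.finrank_range_le W
    have h2 : Module.finrank ℝ (Submodule.span ℝ ({b} : Set (EuclideanSpace ℝ (Fin d₁)))) ≤ 1 := by
      simpa using finrank_span_le_card ({b} : Set (EuclideanSpace ℝ (Fin d₁)))
    have h3 := Submodule.finrank_sup_add_finrank_inf_eq (LinearMap.range W)
      (Submodule.span ℝ ({b} : Set (EuclideanSpace ℝ (Fin d₁))))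
    show Module.finrank ℝ ↥(LinearMap.range W ⊔ Submodule.span ℝ ({b} : Set (EuclideanSpace ℝ (Fin d₁)))) ≤ d₀ + 1
    omega
  have hUle : Module.finrank ℝ (T.map qU) ≤ d₀ + 1 :=
    (Submodule.finrank_map_le qU T).trans hT
  have hVle : Module.finrank ℝ (T.map qV) ≤ d₀ + 1 :=
    (Submodule.finrank_map_le qV T).trans hT
  have hsup : Module.finrank ℝ ↥(T.map qU ⊔ T.map qV) ≤ 2 * (d₀ + 1) := by
    have h4 := Submodule.finrank_sup_add_finrank_inf_eq (T.map qU) (T.map qV)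
    omega
  exact (Submodule.finrank_mono hsub).trans hsup
end
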